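/- Let G be a bipartite graph without cycles with parts [q] (thieves) and B (beads) such that every bead-vertex has degree at least 2, and suppose each thief t receives total fractional amount exactly (q-1)/q (i.e., Σ_{e ∈ δ(t)} u_e = (q-1)/q with all u_e ∈ (0,1) and Σ_{e ∈ δ(k)} u_e = 1 for each bead k). Then |B| = q - 1, and for every choice of q-1 thieves there is a perfect matching of B into those thieves (each chosen thief receiving exactly one bead). -/

import Mathlib

/-- The simple graph on `T ⊕ B` associated with a bipartite edge set
`E ⊆ T × B`. -/
def biGraph {T B : Type} (E : Finset (T × B)) : SimpleGraph (T ⊕ B) where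
  Adj u v := ∃ t b, (t, b) ∈ E ∧
    ((u = Sum.inl t ∧ v = Sum.inr b) ∨ (v = Sum.inl t ∧ u = Sum.inr b))
  symm := by
    constructor
    rintro u v ⟨t, b, h, hc⟩
    exact ⟨t, b, h, hc.symm⟩
  loopless := by
    constructor
    rintro u ⟨t, b, h, (⟨h1, h2⟩ | ⟨h1, h2⟩)⟩ <;> simp_all

/-- Rounding lemma for the case `r_j = q - 1`: in an acyclic bipartite graph of
`q` thieves and beads `B`, with positive fractional weights `u` on the edges
summing to `1` at each bead and to `(q-1)/q` at each thief, where each bead has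
degree at least `2`, one has `|B| = q - 1`, and the beads can be matched
bijectively to any prescribed set of `q - 1` thieves along edges of the graph. -/
theorem round_r_qsub1 {B : Type} [Fintype B] [DecidableEq B] (q : ℕ) (hq : 0 < q)
    (E : Finset (Fin q × B)) (hacyclic : (biGraph E).IsAcyclic)
    (u : Fin q × B → ℚ)
    (hu : ∀ e ∈ E, 0 < u e ∧ u e < 1)
    (hbead : ∀ b : B, 2 ≤ (E.filter (fun e => e.2 = b)).card)
    (hbead_sum : ∀ b : B, ∑ e ∈ E.filter (fun e => e.2 = b), u e = 1)
    (hthief_sum : ∀ t : Fin q, ∑ e ∈ E.filter (fun e => e.1 = t), u e = ((q : ℚ) - 1) / q) :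
    Fintype.card B = q - 1 ∧
    ∀ T : Finset (Fin q), T.card = q - 1 →
      ∃ f : B → Fin q, Function.Injective f ∧ ∀ b : B, f b ∈ T ∧ (f b, b) ∈ E := by
  classical
  have hqQ : (0 : ℚ) < (q : ℚ) := by exact_mod_cast hq
  have hqne : (q : ℚ) ≠ 0 := ne_of_gt hqQ
  -- total weight computed two ways
  have hBsum : ∑ e ∈ E, u e = (Fintype.card B : ℚ) := by
    rw [← Finset.sum_fiberwise_of_maps_to (g := Prod.snd) (t := Finset.univ)
      (fun e _ => Finset.mem_univ _) u]
    simp [hbead_sum]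
  have hTsum : ∑ e ∈ E, u e = (q : ℚ) - 1 := by
    rw [← Finset.sum_fiberwise_of_maps_to (g := Prod.fst) (t := Finset.univ)
      (fun e _ => Finset.mem_univ _) u]
    simp only [hthief_sum]
    rw [Finset.sum_const, Finset.card_univ, Fintype.card_fin, nsmul_eq_mul]
    field_simp
  have hcard : Fintype.card B = q - 1 := by
    have h1 : (Fintype.card B : ℚ) = ((q - 1 : ℕ) : ℚ) := by
      rw [← hBsum, hTsum, Nat.cast_sub hq, Nat.cast_one]
    exact_mod_cast h1
  refine ⟨hcard, fun T hT => ?_⟩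
  -- Hall's condition via the weights
  set t' : B → Finset (Fin q) :=
    fun b => ((E.filter (fun e => e.2 = b)).image Prod.fst) ∩ T with ht'
  have hall : ∀ S : Finset B, S.card ≤ (S.biUnion t').card := by
    intro S
    set N : Finset (Fin q) := (E.filter (fun e => e.2 ∈ S)).image Prod.fst with hN
    -- |S| ≤ |N| * (q-1)/q
    have h1 : (S.card : ℚ) = ∑ e ∈ E.filter (fun e => e.2 ∈ S), u e := by
      rw [← Finset.sum_fiberwise_of_maps_to (g := Prod.snd) (t := S)
        (fun e he => (Finset.mem_filter.mp he).2) u]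
      rw [Finset.card_eq_sum_ones, Nat.cast_sum]
      refine Finset.sum_congr rfl (fun b hb => ?_)
      have hfib : (E.filter (fun e => e.2 ∈ S)).filter (fun e => e.2 = b)
          = E.filter (fun e => e.2 = b) := by
        ext e
        simp only [Finset.mem_filter, and_assoc]
        constructor
        · tauto
        · rintro ⟨he, hb2⟩; exact ⟨he, hb2 ▸ hb, hb2⟩
      rw [hfib, hbead_sum b]
      norm_num
    have h2 : ∑ e ∈ E.filter (fun e => e.2 ∈ S), u e
        ≤ ∑ e ∈ E.filter (fun e => e.1 ∈ N), u e := by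
      apply Finset.sum_le_sum_of_subset_of_nonneg
      · intro e he
        rw [Finset.mem_filter] at he ⊢
        exact ⟨he.1, Finset.mem_image.mpr ⟨e, Finset.mem_filter.mpr he, rfl⟩⟩
      · intro e he _
        exact (hu e (Finset.mem_filter.mp he).1).1.le
    have h3 : ∑ e ∈ E.filter (fun e => e.1 ∈ N), u e
        = (N.card : ℚ) * (((q : ℚ) - 1) / q) := by
      rw [← Finset.sum_fiberwise_of_maps_to (g := Prod.fst) (t := N)
        (fun e he => (Finset.mem_filter.mp he).2) u]
      have : ∀ t ∈ N, ∑ e ∈ (E.filter (fun e => e.1 ∈ N)).filter (fun e => e.1 = t), u e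
          = ((q : ℚ) - 1) / q := by
        intro t ht
        have hfib : (E.filter (fun e => e.1 ∈ N)).filter (fun e => e.1 = t)
            = E.filter (fun e => e.1 = t) := by
          ext e
          simp only [Finset.mem_filter, and_assoc]
          constructor
          · tauto
          · rintro ⟨he, ht1⟩; exact ⟨he, ht1 ▸ ht, ht1⟩
        rw [hfib, hthief_sum t]
      rw [Finset.sum_congr rfl this, Finset.sum_const, nsmul_eq_mul]
    have hkey : (S.card : ℚ) ≤ (N.card : ℚ) * (((q : ℚ) - 1) / q) := by
      rw [h1, ← h3]; exact h2
    -- hence |S| < |N| (or N empty and S empty)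
    have hSN : S.card ≤ N.card - 1 ∨ S.card = 0 := by
      rcases Nat.eq_zero_or_pos N.card with h0 | hpos
      · right
        have : (S.card : ℚ) ≤ 0 := by simpa [h0] using hkey
        exact_mod_cast le_antisymm (by exact_mod_cast this) (Nat.zero_le _)
      · left
        have hlt : (S.card : ℚ) < (N.card : ℚ) := by
          refine lt_of_le_of_lt hkey ?_
          have hNpos : (0 : ℚ) < (N.card : ℚ) := by exact_mod_cast hpos
          have hfrac : ((q : ℚ) - 1) / q < 1 := by
            rw [div_lt_one hqQ]; linarith
          calc (N.card : ℚ) * (((q : ℚ) - 1) / q) < (N.card : ℚ) * 1 := by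
                exact mul_lt_mul_of_pos_left hfrac hNpos
            _ = (N.card : ℚ) := mul_one _
        have : S.card < N.card := by exact_mod_cast hlt
        omega
    -- the biUnion contains N ∩ T
    have hsub : N ∩ T ⊆ S.biUnion t' := by
      intro x hx
      obtain ⟨hxN, hxT⟩ := Finset.mem_inter.mp hx
      obtain ⟨e, he, hex⟩ := Finset.mem_image.mp hxN
      rw [Finset.mem_filter] at he
      refine Finset.mem_biUnion.mpr ⟨e.2, he.2, ?_⟩
      rw [ht']
      exact Finset.mem_inter.mpr
        ⟨Finset.mem_image.mpr ⟨e, Finset.mem_filter.mpr ⟨he.1, rfl⟩, hex⟩, hxT⟩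
    have hNT : N.card ≤ (N ∩ T).card + 1 := by
      have h4 := Finset.card_inter_add_card_sdiff N T
      have h5 : (N \ T).card ≤ 1 := by
        have hsub2 : N \ T ⊆ Finset.univ \ T := by
          intro x hx
          rw [Finset.mem_sdiff] at hx ⊢
          exact ⟨Finset.mem_univ _, hx.2⟩
        have h6 : (Finset.univ \ T).card = q - T.card := by
          rw [Finset.card_sdiff_of_subset (Finset.subset_univ _), Finset.card_univ, Fintype.card_fin]
        have := Finset.card_le_card hsub2
        omega
      omega
    have := Finset.card_le_card hsub
    rcases hSN with h | h <;> omega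
  obtain ⟨f, hinj, hf⟩ := (Finset.all_card_le_biUnion_card_iff_exists_injective t').mp hall
  refine ⟨f, hinj, fun b => ?_⟩
  have hfb := hf b
  rw [ht'] at hfb
  obtain ⟨hfb1, hfb2⟩ := Finset.mem_inter.mp hfb
  obtain ⟨e, he, hex⟩ := Finset.mem_image.mp hfb1
  rw [Finset.mem_filter] at he
  refine ⟨hfb2, ?_⟩
  have : (f b, b) = e := by
    rw [← hex, ← he.2]
  rw [this]
  exact he.1
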